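/- arXiv:1809.09783 — 2 statements merged into one kernel-verified Lean document; each statement's English description precedes it below -/
import Mathlib

section
/- Let Υ : [t₀, ∞) → ℝ be a nonnegative C¹ function satisfying α·Υ'(t) + λ·Υ(t) + S·Υ(t)² ≤ C for all t ≥ t₀, where α, λ, S, C > 0. Then limsup_{t→∞} Υ(t) ≤ (√(λ² + 4SC) − λ)/(2S). -/
open Filter Real

lemma eventually_le_of_deriv_neg (t₀ M δ : ℝ) (hδ : 0 < δ) (f : ℝ → ℝ)
    (hdiff : ∀ t ∈ Set.Ici t₀, HasDerivAt f (deriv f t) t)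
    (hnonneg : ∀ t ∈ Set.Ici t₀, 0 ≤ f t)
    (hder : ∀ t ∈ Set.Ici t₀, M ≤ f t → deriv f t ≤ -δ) :
    ∀ᶠ t in atTop, f t ≤ M := by
  have hcont : ContinuousOn f (Set.Ici t₀) := fun t ht =>
    (hdiff t ht).continuousAt.continuousWithinAt
  -- decay lemma
  have key : ∀ a b : ℝ, t₀ ≤ a → a ≤ b → (∀ u ∈ Set.Ioo a b, M ≤ f u) →
      f b + δ * b ≤ f a + δ * a := by
    intro a b ha hab habove
    set g : ℝ → ℝ := fun u => f u + δ * u with hg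
    have hIcc : Set.Icc a b ⊆ Set.Ici t₀ := fun u hu => le_trans ha hu.1
    have hderivg : ∀ u ∈ Set.Ioo a b, HasDerivAt g (deriv f u + δ) u := by
      intro u hu
      exact (hdiff u (hIcc ⟨le_of_lt hu.1, le_of_lt hu.2⟩)).add
        (by simpa using (hasDerivAt_id u).const_mul δ)
    have hanti : AntitoneOn g (Set.Icc a b) := by
      apply antitoneOn_of_deriv_nonpos (convex_Icc a b)
      · exact ((hcont.mono hIcc).add (continuous_const.mul continuous_id).continuousOn)
      · rw [interior_Icc]
        exact fun u hu => (hderivg u hu).differentiableAt.differentiableWithinAt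
      · rw [interior_Icc]
        intro u hu
        rw [(hderivg u hu).deriv]
        have h1 : deriv f u ≤ -δ :=
          hder u (hIcc ⟨le_of_lt hu.1, le_of_lt hu.2⟩) (habove u hu)
        linarith
    exact hanti (Set.left_mem_Icc.2 hab) (Set.right_mem_Icc.2 hab) hab
  -- step 1: f eventually dips below M
  have step1 : ∃ t₁, t₀ ≤ t₁ ∧ f t₁ ≤ M := by
    by_contra h
    push_neg at h
    set b := t₀ + (f t₀ + 1) / δ with hb
    have hft₀ : 0 ≤ f t₀ := hnonneg t₀ (Set.mem_Ici.2 le_rfl)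
    have hbge : t₀ ≤ b := by
      have h0 : 0 ≤ (f t₀ + 1) / δ := div_nonneg (by linarith) hδ.le
      rw [hb]; linarith
    have hdecay := key t₀ b le_rfl hbge (fun u hu => le_of_lt (h u (le_of_lt hu.1)))
    have hfbnn : 0 ≤ f b := hnonneg b hbge
    have hδb : δ * b = δ * t₀ + (f t₀ + 1) := by
      rw [hb, mul_add, mul_div_cancel₀ _ (ne_of_gt hδ)]
    linarith
  obtain ⟨t₁, ht₁, hft₁⟩ := step1
  -- step 2: f stays below M
  rw [eventually_atTop]
  refine ⟨t₁, fun t₂ ht₂ => ?_⟩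
  by_contra hcontra
  push_neg at hcontra
  set A := Set.Icc t₁ t₂ ∩ f ⁻¹' Set.Iic M with hA
  have hAclosed : IsClosed A :=
    (hcont.mono (fun u hu => le_trans ht₁ hu.1)).preimage_isClosed_of_isClosed
      isClosed_Icc isClosed_Iic
  have hAne : A.Nonempty := ⟨t₁, ⟨le_rfl, ht₂⟩, hft₁⟩
  have hAbdd : BddAbove A := ⟨t₂, fun u hu => hu.1.2⟩
  set s := sSup A with hs
  have hsA : s ∈ A := hAclosed.csSup_mem hAne hAbdd
  have hst₂ : s ≤ t₂ := hsA.1.2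
  have ht₁s : t₁ ≤ s := hsA.1.1
  have hfs : f s ≤ M := hsA.2
  have habove : ∀ u ∈ Set.Ioo s t₂, M ≤ f u := by
    intro u hu
    by_contra hMu
    push_neg at hMu
    have : u ∈ A := ⟨⟨le_trans ht₁s hu.1.le, hu.2.le⟩, hMu.le⟩
    exact absurd (le_csSup hAbdd this) (not_le.2 hu.1)
  have hdecay := key s t₂ (le_trans ht₁ ht₁s) hst₂ habove
  have hslt : s < t₂ := lt_of_le_of_ne hst₂ (fun h => by rw [h] at hfs; linarith)
  nlinarith [hdecay, mul_pos hδ (sub_pos.2 hslt)]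

theorem stmt_0 (α lam S C t₀ : ℝ) (hα : 0 < α) (hlam : 0 < lam) (hS : 0 < S) (hC : 0 < C)
    (Υ : ℝ → ℝ) (hΥdiff : ∀ t ∈ Set.Ici t₀, HasDerivAt Υ (deriv Υ t) t)
    (hΥcont : ContinuousOn (deriv Υ) (Set.Ici t₀))
    (hΥnonneg : ∀ t ∈ Set.Ici t₀, 0 ≤ Υ t)
    (hineq : ∀ t ∈ Set.Ici t₀, α * deriv Υ t + lam * Υ t + S * (Υ t)^2 ≤ C) :
    limsup Υ atTop ≤ (Real.sqrt (lam^2 + 4*S*C) - lam) / (2*S) := by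
  set Ub := (Real.sqrt (lam^2 + 4*S*C) - lam) / (2*S) with hUb
  have hdisc : 0 ≤ lam^2 + 4*S*C := by positivity
  have hsq : Real.sqrt (lam^2 + 4*S*C) ^ 2 = lam^2 + 4*S*C := Real.sq_sqrt hdisc
  have hsqrt_ge : lam ≤ Real.sqrt (lam^2 + 4*S*C) := by
    nlinarith [Real.sqrt_nonneg (lam^2 + 4*S*C)]
  have hUbnn : 0 ≤ Ub := by
    rw [hUb]
    apply div_nonneg (by linarith) (by linarith)
  have hroot : S * Ub^2 + lam * Ub = C := by
    rw [hUb]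
    field_simp
    nlinarith [hsq, Real.sq_sqrt (show (0:ℝ) ≤ lam^2 + S*4*C by positivity)]
  have hcobdd : IsCoboundedUnder (· ≤ ·) atTop Υ := by
    apply isCoboundedUnder_le_of_eventually_le atTop (x := 0)
    filter_upwards [eventually_ge_atTop t₀] with t ht using hΥnonneg t ht
  refine le_of_forall_pos_le_add fun ε hε => ?_
  apply limsup_le_of_le hcobdd
  apply eventually_le_of_deriv_neg t₀ (Ub + ε) (lam * ε / α)
    (by positivity) Υ hΥdiff hΥnonneg
  intro t ht hMt
  have h1 := hineq t ht
  have h3 : Ub ≤ Υ t := by linarith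
  have h4 : S * Ub^2 ≤ S * (Υ t)^2 :=
    mul_le_mul_of_nonneg_left (pow_le_pow_left₀ hUbnn h3 2) hS.le
  have h5 : lam * (Ub + ε) ≤ lam * Υ t := by nlinarith
  have h2 : C + lam * ε ≤ lam * Υ t + S * (Υ t)^2 := by linarith [hroot]
  have h6 : α * deriv Υ t ≤ α * (-(lam * ε / α)) := by
    have he : α * (-(lam * ε / α)) = -(lam * ε) := by field_simp
    rw [he]; linarith
  exact le_of_mul_le_mul_left h6 hα
end

section
/- Let f : (m², ∞) → ℝ be defined on each maximal subinterval where tan(ℓ√(s − m²)) is finite by f(s) = ((s + c)/(s − c))² · tanh(ℓ√(s+m²))/√(s+m²) − tan(ℓ√(s−m²))/√(s−m²), where c = (1−σ)m² with 0 < σ < 1 and m, ℓ > 0. Then on the interval (m², m² + π²/(4ℓ²)), if lim_{s→m²⁺} f(s) > 0 (which holds iff tanh(√2·mℓ) > (σ/(2−σ))²·√2·mℓ), the function f is strictly decreasing and tends to −∞ as s approaches m² + π²/(4ℓ²) from below; hence f has exactly one zero in that interval. -/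
open Real Set Filter

lemma tanh_hasDerivAt (x : ℝ) : HasDerivAt Real.tanh (1 / Real.cosh x ^ 2) x := by
  have h := (Real.hasDerivAt_sinh x).div (Real.hasDerivAt_cosh x) (Real.cosh_pos x).ne'
  have e : (Real.cosh x * Real.cosh x - Real.sinh x * Real.sinh x) / Real.cosh x ^ 2
      = 1 / Real.cosh x ^ 2 := by
    rw [show Real.cosh x * Real.cosh x - Real.sinh x * Real.sinh x
        = Real.cosh x ^ 2 - Real.sinh x ^ 2 by ring, Real.cosh_sq_sub_sinh_sq]
  rw [e] at h
  have : Real.tanh = fun y => Real.sinh y / Real.cosh y :=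
    funext fun y => Real.tanh_eq_sinh_div_cosh y
  rw [this]
  exact h

lemma continuous_tanh' : Continuous Real.tanh := by
  have : Real.tanh = fun y => Real.sinh y / Real.cosh y :=
    funext fun y => Real.tanh_eq_sinh_div_cosh y
  rw [this]
  exact Real.continuous_sinh.div Real.continuous_cosh fun x => (Real.cosh_pos x).ne'

lemma tanh_pos' {x : ℝ} (hx : 0 < x) : 0 < Real.tanh x := by
  rw [Real.tanh_eq_sinh_div_cosh]
  exact div_pos (Real.sinh_pos_iff.2 hx) (Real.cosh_pos x)

lemma tanh_strictConcave : StrictConcaveOn ℝ (Set.Ici (0:ℝ)) Real.tanh := by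
  apply StrictAntiOn.strictConcaveOn_of_deriv (convex_Ici 0) continuous_tanh'.continuousOn
  rw [interior_Ici]
  intro x hx y hy hxy
  rw [(tanh_hasDerivAt x).deriv, (tanh_hasDerivAt y).deriv]
  have hcx : 0 < Real.cosh x := Real.cosh_pos x
  have h1 : Real.cosh x < Real.cosh y := by
    rw [Real.cosh_lt_cosh]
    rw [abs_of_pos hx, abs_of_pos (hx.trans hxy)]
    exact hxy
  have h2 : Real.cosh x ^ 2 < Real.cosh y ^ 2 := by nlinarith
  exact one_div_lt_one_div_of_lt (by positivity) h2

lemma tanh_div_strictAnti {x y : ℝ} (hx : 0 < x) (hxy : x < y) :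
    Real.tanh y / y < Real.tanh x / x := by
  have := tanh_strictConcave.secant_strict_mono (a := 0) (x := x) (y := y)
    Set.self_mem_Ici hx.le (hx.trans hxy).le hx.ne' (hx.trans hxy).ne' hxy
  simpa [Real.tanh_zero] using this

lemma tan_strictConvex : StrictConvexOn ℝ (Set.Ico (0:ℝ) (π/2)) Real.tan := by
  apply StrictMonoOn.strictConvexOn_of_deriv (convex_Ico _ _)
  · intro x hx
    refine (Real.continuousAt_tan.2 ?_).continuousWithinAt
    exact (Real.cos_pos_of_mem_Ioo ⟨by linarith [Real.pi_pos, hx.1], hx.2⟩).ne'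
  · rw [interior_Ico]
    intro x hx y hy hxy
    rw [Real.deriv_tan, Real.deriv_tan]
    have hcy : 0 < Real.cos y := Real.cos_pos_of_mem_Ioo ⟨by linarith [Real.pi_pos, hy.1], hy.2⟩
    have h1 : Real.cos y < Real.cos x := by
      apply Real.strictAntiOn_cos ⟨hx.1.le, by linarith [Real.pi_pos, hx.2]⟩
        ⟨hy.1.le, by linarith [Real.pi_pos, hy.2]⟩ hxy
    have h2 : Real.cos y ^ 2 < Real.cos x ^ 2 := by nlinarith
    exact one_div_lt_one_div_of_lt (by positivity) h2

lemma tan_div_strictMono {x y : ℝ} (hx : 0 < x) (hxy : x < y) (hy : y < π/2) :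
    Real.tan x / x < Real.tan y / y := by
  have := tan_strictConvex.secant_strict_mono (a := 0) (x := x) (y := y)
    ⟨le_refl 0, by linarith [Real.pi_pos]⟩ ⟨hx.le, by linarith⟩ ⟨(hx.trans hxy).le, hy⟩
    hx.ne' (hx.trans hxy).ne' hxy
  simpa [Real.tan_zero] using this

lemma key1 {ℓ t1 t2 : ℝ} (hℓ : 0 < ℓ) (h1 : 0 < t1) (h12 : t1 < t2) :
    Real.tanh (ℓ*t2)/t2 < Real.tanh (ℓ*t1)/t1 := by
  have h2 : 0 < t2 := h1.trans h12
  have h := tanh_div_strictAnti (mul_pos hℓ h1) (mul_lt_mul_of_pos_left h12 hℓ)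
  have e1 : Real.tanh (ℓ*t1)/t1 = ℓ * (Real.tanh (ℓ*t1)/(ℓ*t1)) := by
    rw [mul_div_assoc', mul_div_mul_left _ _ hℓ.ne']
  have e2 : Real.tanh (ℓ*t2)/t2 = ℓ * (Real.tanh (ℓ*t2)/(ℓ*t2)) := by
    rw [mul_div_assoc', mul_div_mul_left _ _ hℓ.ne']
  rw [e1, e2]
  exact mul_lt_mul_of_pos_left h hℓ

lemma key2 {ℓ t1 t2 : ℝ} (hℓ : 0 < ℓ) (h1 : 0 < t1) (h12 : t1 < t2) (hv : ℓ*t2 < π/2) :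
    Real.tan (ℓ*t1)/t1 < Real.tan (ℓ*t2)/t2 := by
  have h2 : 0 < t2 := h1.trans h12
  have h := tan_div_strictMono (mul_pos hℓ h1) (mul_lt_mul_of_pos_left h12 hℓ) hv
  have e1 : Real.tan (ℓ*t1)/t1 = ℓ * (Real.tan (ℓ*t1)/(ℓ*t1)) := by
    rw [mul_div_assoc', mul_div_mul_left _ _ hℓ.ne']
  have e2 : Real.tan (ℓ*t2)/t2 = ℓ * (Real.tan (ℓ*t2)/(ℓ*t2)) := by
    rw [mul_div_assoc', mul_div_mul_left _ _ hℓ.ne']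
  rw [e1, e2]
  exact mul_lt_mul_of_pos_left h hℓ

lemma GcontAt (c m ℓ : ℝ) (s : ℝ) (h1 : s - c ≠ 0) (h2 : Real.sqrt (s+m^2) ≠ 0) :
    ContinuousAt
      (fun s => ((s+c)/(s-c))^2 * Real.tanh (ℓ*Real.sqrt (s+m^2))/Real.sqrt (s+m^2)) s := by
  have cC : ContinuousAt (fun s : ℝ => Real.sqrt (s+m^2)) s :=
    Real.continuous_sqrt.continuousAt.comp (continuousAt_id.add continuousAt_const)
  have cA : ContinuousAt (fun s : ℝ => ((s+c)/(s-c))^2) s :=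
    ((continuousAt_id.add continuousAt_const).div
      (continuousAt_id.sub continuousAt_const) h1).pow 2
  have cB : ContinuousAt (fun s : ℝ => Real.tanh (ℓ*Real.sqrt (s+m^2))) s :=
    continuous_tanh'.continuousAt.comp (continuousAt_const.mul cC)
  exact (cA.mul cB).div cC h2

set_option maxHeartbeats 1000000 in
theorem stmt_9 (σ m ℓ : ℝ) (hσ : 0 < σ) (hσ1 : σ < 1) (hm : 1 ≤ m) (hℓ : 0 < ℓ)
    (c : ℝ) (hc : c = (1-σ)*m^2)
    (f : ℝ → ℝ)
    (hf : ∀ s, f s = ((s+c)/(s-c))^2 * Real.tanh (ℓ*Real.sqrt (s+m^2))/Real.sqrt (s+m^2)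
                      - Real.tan (ℓ*Real.sqrt (s-m^2))/Real.sqrt (s-m^2))
    (hlim : Real.tanh (Real.sqrt 2 * m * ℓ) > (σ/(2-σ))^2 * (Real.sqrt 2 * m * ℓ)) :
    StrictAntiOn f (Set.Ioo (m^2) (m^2 + Real.pi^2/(4*ℓ^2))) ∧
    Filter.Tendsto f
      (nhdsWithin (m^2 + Real.pi^2/(4*ℓ^2)) (Set.Iio (m^2 + Real.pi^2/(4*ℓ^2))))
      Filter.atBot ∧
    (∃! s, s ∈ Set.Ioo (m^2) (m^2 + Real.pi^2/(4*ℓ^2)) ∧ f s = 0) := by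
  have hm0 : (0:ℝ) < m := lt_of_lt_of_le one_pos hm
  have hm2 : (0:ℝ) < m^2 := by positivity
  have hc0 : 0 < c := by rw [hc]; nlinarith
  have hcm : c < m^2 := by rw [hc]; nlinarith
  set L := m^2 + π^2/(4*ℓ^2) with hLdef
  have hpi := Real.pi_pos
  have hL : m^2 < L := by
    rw [hLdef]
    have : 0 < π^2/(4*ℓ^2) := by positivity
    linarith
  have hhalf : ℓ * (π/(2*ℓ)) = π/2 := by field_simp
  -- basic facts for points in the interval
  have hfacts : ∀ s ∈ Set.Ioo (m^2) L,
      0 < s - c ∧ 0 < s + c ∧ 0 < Real.sqrt (s+m^2) ∧ 0 < Real.sqrt (s-m^2)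
        ∧ ℓ * Real.sqrt (s-m^2) < π/2 := by
    intro s hs
    obtain ⟨h1, h2⟩ := hs
    refine ⟨by linarith, by linarith, Real.sqrt_pos.2 (by linarith),
      Real.sqrt_pos.2 (by linarith), ?_⟩
    have hsq : Real.sqrt (s-m^2) < π/(2*ℓ) := by
      rw [Real.sqrt_lt' (by positivity)]
      calc s - m^2 < π^2/(4*ℓ^2) := by rw [hLdef] at h2; linarith
        _ = (π/(2*ℓ))^2 := by field_simp; ring
    calc ℓ * Real.sqrt (s-m^2) < ℓ * (π/(2*ℓ)) := mul_lt_mul_of_pos_left hsq hℓ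
      _ = π/2 := hhalf
  -- strict antitonicity
  have hanti : StrictAntiOn f (Set.Ioo (m^2) L) := by
    intro s1 hs1 s2 hs2 h12
    obtain ⟨hc1, hp1, hq1, hr1, hv1⟩ := hfacts s1 hs1
    obtain ⟨hc2, hp2, hq2, hr2, hv2⟩ := hfacts s2 hs2
    rw [hf s1, hf s2]
    have htlt : Real.sqrt (s1+m^2) < Real.sqrt (s2+m^2) :=
      Real.sqrt_lt_sqrt (by nlinarith [hs1.1]) (by linarith)
    have hrlt : Real.sqrt (s1-m^2) < Real.sqrt (s2-m^2) :=
      Real.sqrt_lt_sqrt (by linarith [hs1.1]) (by linarith)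
    have hB := key1 hℓ hq1 htlt
    have hH := key2 hℓ hr1 hrlt hv2
    have hApos : 0 < (s2+c)/(s2-c) := by positivity
    have hAlt : (s2+c)/(s2-c) < (s1+c)/(s1-c) := by
      rw [div_lt_div_iff₀ hc2 hc1]
      nlinarith
    have hA2 : ((s2+c)/(s2-c))^2 < ((s1+c)/(s1-c))^2 := by nlinarith
    have hBpos : 0 < Real.tanh (ℓ*Real.sqrt (s2+m^2)) / Real.sqrt (s2+m^2) :=
      div_pos (tanh_pos' (by positivity)) hq2
    have hG : ((s2+c)/(s2-c))^2 * Real.tanh (ℓ*Real.sqrt (s2+m^2))/Real.sqrt (s2+m^2)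
        < ((s1+c)/(s1-c))^2 * Real.tanh (ℓ*Real.sqrt (s1+m^2))/Real.sqrt (s1+m^2) := by
      rw [mul_div_assoc, mul_div_assoc]
      exact mul_lt_mul'' hA2 hB (sq_nonneg _) hBpos.le
    exact sub_lt_sub hG hH
  -- limit to -infty at L
  have hbot : Filter.Tendsto f (nhdsWithin L (Set.Iio L)) Filter.atBot := by
    have hLc : L - c ≠ 0 := by nlinarith [hL, hcm]
    have hLs : Real.sqrt (L+m^2) ≠ 0 := (Real.sqrt_pos.2 (by nlinarith [hL, hm2])).ne'
    have hGt : Tendsto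
        (fun s => ((s+c)/(s-c))^2 * Real.tanh (ℓ*Real.sqrt (s+m^2))/Real.sqrt (s+m^2))
        (nhdsWithin L (Set.Iio L))
        (nhds (((L+c)/(L-c))^2 * Real.tanh (ℓ*Real.sqrt (L+m^2))/Real.sqrt (L+m^2))) :=
      (GcontAt c m ℓ L hLc hLs).continuousWithinAt
    have hsqL : Real.sqrt (L - m^2) = π/(2*ℓ) := by
      rw [show L - m^2 = (π/(2*ℓ))^2 by rw [hLdef]; field_simp; ring]
      exact Real.sqrt_sq (by positivity)
    have hvL : Tendsto (fun s => ℓ * Real.sqrt (s - m^2)) (nhdsWithin L (Set.Iio L))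
        (nhdsWithin (π/2) (Set.Iio (π/2))) := by
      rw [tendsto_nhdsWithin_iff]
      constructor
      · have hcont : ContinuousAt (fun s : ℝ => ℓ * Real.sqrt (s - m^2)) L :=
          continuousAt_const.mul
            (Real.continuous_sqrt.continuousAt.comp (continuousAt_id.sub continuousAt_const))
        have h : Tendsto (fun s : ℝ => ℓ * Real.sqrt (s - m^2)) (nhdsWithin L (Set.Iio L))
            (nhds (ℓ * Real.sqrt (L - m^2))) :=
          hcont.tendsto.mono_left nhdsWithin_le_nhds
        have e : ℓ * Real.sqrt (L - m^2) = π/2 := by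
          rw [hsqL]; exact hhalf
        rwa [e] at h
      · filter_upwards [self_mem_nhdsWithin] with s hs
        simp only [Set.mem_Iio] at hs ⊢
        have hsq : Real.sqrt (s-m^2) < π/(2*ℓ) := by
          rw [Real.sqrt_lt' (by positivity)]
          calc s - m^2 < π^2/(4*ℓ^2) := by rw [hLdef] at hs; linarith
            _ = (π/(2*ℓ))^2 := by field_simp; ring
        calc ℓ * Real.sqrt (s-m^2) < ℓ * (π/(2*ℓ)) := mul_lt_mul_of_pos_left hsq hℓ
          _ = π/2 := hhalf
    have htan : Tendsto (fun s => Real.tan (ℓ * Real.sqrt (s - m^2)))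
        (nhdsWithin L (Set.Iio L)) atTop := Real.tendsto_tan_pi_div_two.comp hvL
    have hinv : Tendsto (fun s => 1 / Real.sqrt (s - m^2)) (nhdsWithin L (Set.Iio L))
        (nhds (1 / (π/(2*ℓ)))) := by
      have hcont : ContinuousAt (fun s : ℝ => 1 / Real.sqrt (s - m^2)) L := by
        have h1 : ContinuousAt (fun s : ℝ => Real.sqrt (s - m^2)) L := by fun_prop
        have h2 : Real.sqrt (L - m^2) ≠ 0 := by rw [hsqL]; positivity
        exact continuousAt_const.div h1 h2
      have h : Tendsto (fun s : ℝ => 1 / Real.sqrt (s - m^2)) (nhdsWithin L (Set.Iio L))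
          (nhds (1 / Real.sqrt (L - m^2))) :=
        hcont.tendsto.mono_left nhdsWithin_le_nhds
      rwa [hsqL] at h
    have hHt : Tendsto (fun s => Real.tan (ℓ * Real.sqrt (s - m^2)) / Real.sqrt (s - m^2))
        (nhdsWithin L (Set.Iio L)) atTop := by
      have h := Filter.Tendsto.atTop_mul_pos (show (0:ℝ) < 1/(π/(2*ℓ)) by positivity) htan hinv
      refine h.congr fun s => ?_
      rw [← div_eq_mul_one_div]
    have h := hGt.add_atBot (tendsto_neg_atBot_iff.mpr hHt)
    refine h.congr fun s => ?_
    rw [hf s]; ring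
  refine ⟨hanti, hbot, ?_⟩
  -- continuity on the interval
  have hfc : ContinuousOn f (Set.Ioo (m^2) L) := by
    intro s hs
    obtain ⟨hc1, hp1, hq1, hr1, hv1⟩ := hfacts s hs
    apply ContinuousAt.continuousWithinAt
    have hvpos : 0 < ℓ * Real.sqrt (s - m^2) := mul_pos hℓ hr1
    have hcos : Real.cos (ℓ * Real.sqrt (s - m^2)) ≠ 0 :=
      (Real.cos_pos_of_mem_Ioo ⟨by linarith, hv1⟩).ne'
    have cV : ContinuousAt (fun s : ℝ => ℓ * Real.sqrt (s - m^2)) s := by fun_prop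
    have hT : ContinuousAt (fun s : ℝ => Real.tan (ℓ*Real.sqrt (s - m^2))) s :=
      ContinuousAt.comp (g := Real.tan) (x := s) (Real.continuousAt_tan.2 hcos) cV
    have hS : ContinuousAt (fun s : ℝ => Real.sqrt (s - m^2)) s := by fun_prop
    have hHc : ContinuousAt
        (fun s => Real.tan (ℓ*Real.sqrt (s-m^2))/Real.sqrt (s-m^2)) s :=
      hT.div hS hr1.ne'
    have h := (GcontAt c m ℓ s hc1.ne' hq1.ne').sub hHc
    have hfe : f = fun s => ((s+c)/(s-c))^2 * Real.tanh (ℓ*Real.sqrt (s+m^2))/Real.sqrt (s+m^2)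
                      - Real.tan (ℓ*Real.sqrt (s-m^2))/Real.sqrt (s-m^2) := funext hf
    rw [hfe]
    exact h
  -- limit at m² from the right
  have hmc : m^2 - c ≠ 0 := by nlinarith
  have hms : Real.sqrt (m^2+m^2) ≠ 0 := (Real.sqrt_pos.2 (by nlinarith)).ne'
  have hGt : Tendsto
      (fun s => ((s+c)/(s-c))^2 * Real.tanh (ℓ*Real.sqrt (s+m^2))/Real.sqrt (s+m^2))
      (nhdsWithin (m^2) (Set.Ioi (m^2)))
      (nhds (((m^2+c)/(m^2-c))^2 * Real.tanh (ℓ*Real.sqrt (m^2+m^2))/Real.sqrt (m^2+m^2))) :=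
    (GcontAt c m ℓ (m^2) hmc hms).continuousWithinAt
  have hslope : Tendsto (fun x => Real.tan x / x) (nhdsWithin 0 {(0:ℝ)}ᶜ) (nhds 1) := by
    have h := Real.hasDerivAt_tan (x := 0) (by simp)
    rw [hasDerivAt_iff_tendsto_slope] at h
    have h2 : Tendsto (slope Real.tan 0) (nhdsWithin 0 {(0:ℝ)}ᶜ) (nhds 1) := by
      simpa using h
    refine h2.congr fun x => ?_
    simp [slope_def_field, Real.tan_zero]
  have hvm : Tendsto (fun s => ℓ * Real.sqrt (s - m^2)) (nhdsWithin (m^2) (Set.Ioi (m^2)))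
      (nhdsWithin 0 {(0:ℝ)}ᶜ) := by
    rw [tendsto_nhdsWithin_iff]
    constructor
    · have hcont : ContinuousAt (fun s : ℝ => ℓ * Real.sqrt (s - m^2)) (m^2) :=
        continuousAt_const.mul
          (Real.continuous_sqrt.continuousAt.comp (continuousAt_id.sub continuousAt_const))
      have h : Tendsto (fun s : ℝ => ℓ * Real.sqrt (s - m^2))
          (nhdsWithin (m^2) (Set.Ioi (m^2))) (nhds (ℓ * Real.sqrt (m^2 - m^2))) :=
        hcont.tendsto.mono_left nhdsWithin_le_nhds
      simpa using h
    · filter_upwards [self_mem_nhdsWithin] with s hs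
      simp only [Set.mem_Ioi] at hs
      have hv : 0 < ℓ * Real.sqrt (s - m^2) :=
        mul_pos hℓ (Real.sqrt_pos.2 (by linarith))
      simp only [Set.mem_compl_iff, Set.mem_singleton_iff]
      exact hv.ne'
  have htan1 : Tendsto (fun s => Real.tan (ℓ * Real.sqrt (s - m^2)) / (ℓ * Real.sqrt (s - m^2)))
      (nhdsWithin (m^2) (Set.Ioi (m^2))) (nhds 1) := hslope.comp hvm
  have hHt : Tendsto (fun s => Real.tan (ℓ * Real.sqrt (s - m^2)) / Real.sqrt (s - m^2))
      (nhdsWithin (m^2) (Set.Ioi (m^2))) (nhds ℓ) := by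
    have h := htan1.const_mul ℓ
    rw [mul_one] at h
    refine h.congr' ?_
    filter_upwards [self_mem_nhdsWithin] with s hs
    simp only [Set.mem_Ioi] at hs
    have hr : (0:ℝ) < Real.sqrt (s - m^2) := Real.sqrt_pos.2 (by linarith)
    field_simp
  have hft : Tendsto f (nhdsWithin (m^2) (Set.Ioi (m^2)))
      (nhds (((m^2+c)/(m^2-c))^2 * Real.tanh (ℓ*Real.sqrt (m^2+m^2))/Real.sqrt (m^2+m^2) - ℓ)) := by
    have h := hGt.sub hHt
    exact h.congr fun s => (hf s).symm
  -- the limit value is positive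
  have h2σ : (0:ℝ) < 2 - σ := by linarith
  have hKpos :
      0 < ((m^2+c)/(m^2-c))^2 * Real.tanh (ℓ*Real.sqrt (m^2+m^2))/Real.sqrt (m^2+m^2) - ℓ := by
    have hsq2 : Real.sqrt (m^2+m^2) = Real.sqrt 2 * m := by
      rw [show m^2 + m^2 = 2 * m^2 by ring, Real.sqrt_mul (by norm_num)]
      rw [Real.sqrt_sq hm0.le]
    have hratio : (m^2+c)/(m^2-c) = (2-σ)/σ := by
      rw [hc, div_eq_div_iff (by nlinarith) (by linarith)]
      ring
    rw [hsq2, show ℓ * (Real.sqrt 2 * m) = Real.sqrt 2 * m * ℓ by ring, hratio]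
    set X := Real.sqrt 2 * m * ℓ with hX
    have hPpos : (0:ℝ) < ((2-σ)/σ)^2 := by positivity
    have hkey : X < ((2-σ)/σ)^2 * Real.tanh X := by
      have h1 := mul_lt_mul_of_pos_left hlim hPpos
      have h2 : ((2-σ)/σ)^2 * ((σ/(2-σ))^2 * X) = X := by
        field_simp
      linarith
    have hR : (0:ℝ) < Real.sqrt 2 * m := by positivity
    rw [sub_pos, lt_div_iff₀ hR]
    calc ℓ * (Real.sqrt 2 * m) = X := by rw [hX]; ring
      _ < ((2-σ)/σ)^2 * Real.tanh X := hkey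
  -- find a point with positive value
  have hev1 : ∀ᶠ s in nhdsWithin (m^2) (Set.Ioi (m^2)), 0 < f s :=
    hft.eventually (eventually_gt_nhds hKpos)
  have hev1' : ∀ᶠ s in nhdsWithin (m^2) (Set.Ioi (m^2)), s ∈ Set.Ioo (m^2) L :=
    eventually_of_mem (Ioo_mem_nhdsGT_of_mem ⟨le_refl _, hL⟩) fun s hs => hs
  obtain ⟨s₁, hfs₁, hs₁⟩ := (hev1.and hev1').exists
  -- find a point with negative value
  have hev0 : ∀ᶠ s in nhdsWithin L (Set.Iio L), f s < 0 :=
    hbot.eventually (eventually_lt_atBot 0)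
  have hev0' : ∀ᶠ s in nhdsWithin L (Set.Iio L), s ∈ Set.Ioo (m^2) L :=
    eventually_of_mem (Ioo_mem_nhdsLT_of_mem ⟨hL, le_refl _⟩) fun s hs => hs
  obtain ⟨s₀, hfs₀, hs₀⟩ := (hev0.and hev0').exists
  -- s₁ < s₀
  have hlt : s₁ < s₀ := by
    rcases lt_trichotomy s₁ s₀ with h | h | h
    · exact h
    · exfalso; rw [h] at hfs₁; linarith
    · exfalso
      have := hanti hs₀ hs₁ h
      linarith
  have hsub : Set.Icc s₁ s₀ ⊆ Set.Ioo (m^2) L := Set.Icc_subset_Ioo hs₁.1 hs₀.2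
  have hivt := intermediate_value_Icc' hlt.le (hfc.mono hsub)
  have h0mem : (0:ℝ) ∈ Set.Icc (f s₀) (f s₁) := ⟨hfs₀.le, hfs₁.le⟩
  obtain ⟨s, hsmem, hfs0⟩ := hivt h0mem
  refine ⟨s, ⟨hsub hsmem, hfs0⟩, ?_⟩
  rintro y ⟨hy, hfy⟩
  by_contra hne
  rcases lt_or_gt_of_ne hne with h | h
  · have := hanti hy (hsub hsmem) h
    rw [hfy, hfs0] at this
    exact lt_irrefl 0 this
  · have := hanti (hsub hsmem) hy h
    rw [hfy, hfs0] at this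
    exact lt_irrefl 0 this
end
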